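/- Let X be a zero-dimensional metrizable compact space and f : X → X a minimal homeomorphism such that (X,G_f) has no continuous 2-coloring. Let K be a zero-dimensional metrizable compact space and G a closed graph on K with (K,G) ≼^i_c (X,G_f). Then exactly one of the following holds: (1) (K,G) admits a continuous 2-coloring; (2) (X,G_f) ≼^i_c (K,G). In particular, (X,G_f) is ≼^i_c-minimal both in the class of closed graphs on zero-dimensional metrizable compact spaces with continuous chromatic number at least three, and in the class 𝔊₂ of graphs induced by a homeomorphism of a zero-dimensional metrizable compact space with continuous chromatic number at least three. -/

import Mathlib

open TopologicalSpace Function Set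

/-- A *graph* on `X`: a symmetric irreflexive binary relation on `X`. -/
def IsGraph {X : Type*} (G : Set (X × X)) : Prop :=
  (∀ x y : X, (x, y) ∈ G → (y, x) ∈ G) ∧ ∀ x : X, (x, x) ∉ G

/-- `(X, G)` admits a continuous coloring with `n` colors
(`Fin n` carries the discrete topology). -/
def HasContColoring {X : Type*} [TopologicalSpace X] (G : Set (X × X)) (n : ℕ) : Prop :=
  ∃ c : X → Fin n, Continuous c ∧ ∀ x y : X, (x, y) ∈ G → c x ≠ c y

/-- `(X, G)` admits a countable continuous coloring (`ℕ` is discrete). -/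
def HasCtbleContColoring {X : Type*} [TopologicalSpace X] (G : Set (X × X)) : Prop :=
  ∃ c : X → ℕ, Continuous c ∧ ∀ x y : X, (x, y) ∈ G → c x ≠ c y

/-- `(X,G) ≼_c (Y,H)` : there is a continuous homomorphism. -/
def RedC {X Y : Type*} [TopologicalSpace X] [TopologicalSpace Y]
    (G : Set (X × X)) (H : Set (Y × Y)) : Prop :=
  ∃ φ : X → Y, Continuous φ ∧ ∀ x y : X, (x, y) ∈ G → (φ x, φ y) ∈ H

/-- `(X,G) ≼^i_c (Y,H)` : there is an injective continuous homomorphism. -/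
def RedIC {X Y : Type*} [TopologicalSpace X] [TopologicalSpace Y]
    (G : Set (X × X)) (H : Set (Y × Y)) : Prop :=
  ∃ φ : X → Y, Continuous φ ∧ Function.Injective φ ∧
    ∀ x y : X, (x, y) ∈ G → (φ x, φ y) ∈ H

/-- A space is zero-dimensional if the clopen sets form a basis. -/
def ZeroDim (X : Type*) [TopologicalSpace X] : Prop :=
  IsTopologicalBasis {s : Set X | IsClopen s}

/-- zero-dimensional metrizable compact -/
def Is0DMC (X : Type*) [TopologicalSpace X] : Prop :=
  CompactSpace X ∧ MetrizableSpace X ∧ ZeroDim X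

/-- zero-dimensional metrizable separable -/
def Is0DMS (X : Type*) [TopologicalSpace X] : Prop :=
  MetrizableSpace X ∧ SeparableSpace X ∧ ZeroDim X

/-- The graph induced by a (total) function `f : X → X`. -/
def FnGraph {X : Type*} (f : X → X) : Set (X × X) :=
  {p | p.1 ≠ p.2 ∧ (p.2 = f p.1 ∨ p.1 = f p.2)}

/-- A homeomorphism of a compact space is minimal if all of its ℤ-orbits are dense. -/
def IsMinimalHomeo {X : Type*} [TopologicalSpace X] (f : X ≃ₜ X) : Prop :=
  ∀ x : X, Dense (Set.range fun i : ℤ => (f.toEquiv ^ i) x)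

private lemma orbit_mem {X : Type*} [TopologicalSpace X] (f : X ≃ₜ X) (z : X) (Y : Set X)
    (hfwd : ∀ n : ℕ, (⇑f)^[n] z ∈ Y) (hbwd : ∀ n : ℕ, (⇑f.symm)^[n] z ∈ Y) :
    ∀ i : ℤ, (f.toEquiv ^ i) z ∈ Y := by
  intro i
  cases i with
  | ofNat n =>
      have : (f.toEquiv ^ (n : ℤ)) z = (⇑f)^[n] z := by rw [zpow_natCast]; rfl
      rw [Int.ofNat_eq_coe, this]; exact hfwd n
  | negSucc n =>
      have : (f.toEquiv ^ (Int.negSucc n)) z = (⇑f.symm)^[n+1] z := by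
        rw [zpow_negSucc, ← inv_pow]; rfl
      rw [this]; exact hbwd (n+1)

lemma fwd_dense {X : Type*} [TopologicalSpace X] [CompactSpace X] [T2Space X]
    (f : X ≃ₜ X) (hmin : IsMinimalHomeo f) (y0 : X) :
    Dense (range fun n : ℕ => (⇑f)^[n] y0) := by
  set S := range fun n : ℕ => (⇑f)^[n] y0 with hS
  set Y := closure S with hY
  have hYcl : IsClosed Y := isClosed_closure
  have hfY : ⇑f '' Y ⊆ Y := by
    have h1 : ⇑f '' S ⊆ S := by
      rintro _ ⟨_, ⟨n, rfl⟩, rfl⟩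
      exact ⟨n + 1, by simp [Function.iterate_succ_apply']⟩

    calc ⇑f '' Y ⊆ closure (⇑f '' S) := image_closure_subset_closure_image f.continuous
      _ ⊆ closure S := closure_mono h1
      _ = Y := rfl
  have hy0Y : y0 ∈ Y := subset_closure ⟨0, rfl⟩
  set Z : ℕ → Set X := fun n => (⇑f)^[n] '' Y with hZ
  have hZd : ∀ n, Z (n + 1) ⊆ Z n := by
    intro n
    have h1 : (⇑f)^[n+1] '' Y = (⇑f)^[n] '' (⇑f '' Y) := by
      rw [← image_comp, ← Function.iterate_succ]
    calc Z (n+1) = (⇑f)^[n] '' (⇑f '' Y) := h1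
      _ ⊆ (⇑f)^[n] '' Y := image_mono hfY
  have hZne : ∀ n, (Z n).Nonempty := fun n => ⟨(⇑f)^[n] y0, ⟨y0, hy0Y, rfl⟩⟩
  have hZc : ∀ n, IsCompact (Z n) := fun n =>
    (hYcl.isCompact).image (f.continuous.iterate n)
  have hZcl : ∀ n, IsClosed (Z n) := fun n => (hZc n).isClosed
  obtain ⟨z, hz⟩ := IsCompact.nonempty_iInter_of_sequence_nonempty_isCompact_isClosed Z hZd hZne (hZc 0) hZcl
  have hzY : z ∈ Y := by
    have h0 := mem_iInter.1 hz 0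
    simpa [hZ] using h0
  have hfwd : ∀ n : ℕ, (⇑f)^[n] z ∈ Y := by
    intro n; induction n with
    | zero => exact hzY
    | succ n ih =>
        rw [Function.iterate_succ_apply']
        exact hfY ⟨_, ih, rfl⟩
  have hbwd : ∀ n : ℕ, (⇑f.symm)^[n] z ∈ Y := by
    intro n
    obtain ⟨w, hw, hwz⟩ := mem_iInter.1 hz n
    have : (⇑f.symm)^[n] z = w := by
      rw [← hwz]
      exact (Function.LeftInverse.iterate f.symm_apply_apply n) w
    rw [this]; exact hw
  have horb : (range fun i : ℤ => (f.toEquiv ^ i) z) ⊆ Y := by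
    rintro _ ⟨i, rfl⟩
    exact orbit_mem f z Y hfwd hbwd i
  have hYd : Dense Y := (hmin z).mono horb
  have hYuniv : Y = univ := hYcl.closure_eq ▸ hYd.closure_eq
  rw [dense_iff_closure_eq]
  exact hYuniv

private lemma clopen_inter_eq {X : Type*} [TopologicalSpace X] (hzd : ZeroDim X)
    (T : Set X) (hT : IsClosed T) :
    ⋂ (V : {V : Set X // IsClopen V ∧ T ⊆ V}), (V : Set X) = T := by
  apply Subset.antisymm
  · intro x hx
    by_contra hxT
    obtain ⟨v, hv, hxv, hvsub⟩ := hzd.exists_subset_of_mem_open (show x ∈ Tᶜ from hxT) hT.isOpen_compl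
    have hcl : IsClopen (vᶜ : Set X) := hv.compl
    have hTsub : T ⊆ vᶜ := fun t ht hv' => hvsub hv' ht
    exact (mem_iInter.1 hx ⟨vᶜ, hcl, hTsub⟩) hxv
  · intro x hx
    exact mem_iInter.2 fun V => V.2.2 hx

private lemma iter_cancel {X : Type*} [TopologicalSpace X] (f : X ≃ₜ X) :
    ∀ (i N : ℕ), i ≤ N → ∀ y : X, (⇑f)^[i] ((⇑f.symm)^[N] y) = (⇑f.symm)^[N - i] y := by
  intro i
  induction i with
  | zero => intro N _ y; simp
  | succ i ih =>
      intro N hiN y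
      rw [Function.iterate_succ_apply', ih N (by omega) y]
      have hNi : N - i = (N - (i + 1)) + 1 := by omega
      rw [hNi, Function.iterate_succ_apply']
      exact f.apply_symm_apply _

open Fin.NatCast in
private lemma dichot {X : Type*} [TopologicalSpace X] (hX : Is0DMC X)
    (f : X ≃ₜ X) (hmin : IsMinimalHomeo f)
    {K : Type*} [TopologicalSpace K] [CompactSpace K]
    (G : Set (K × K)) (hsym : ∀ a b : K, (a, b) ∈ G → (b, a) ∈ G)
    (φ : K → X) (hφc : Continuous φ) (hφi : Function.Injective φ)
    (hφh : ∀ a b : K, (a, b) ∈ G → (φ a, φ b) ∈ FnGraph ⇑f)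
    (hHcl : IsClosed (Prod.map φ φ '' G)) :
    HasContColoring G 2 ∨ RedIC (FnGraph ⇑f) G := by
  classical
  haveI : CompactSpace X := hX.1
  haveI : MetrizableSpace X := hX.2.1
  set H : Set (X × X) := Prod.map φ φ '' G with hH
  have hHsym : ∀ p ∈ H, (p.2, p.1) ∈ H := by
    rintro _ ⟨⟨a, b⟩, hab, rfl⟩
    exact ⟨(b, a), hsym a b hab, rfl⟩
  set T : Set X := {u : X | (u, f u) ∈ H} with hT
  have hTcl : IsClosed T := hHcl.preimage (continuous_id.prodMk f.continuous)
  set S : ℕ → Set X := fun n => ⋂ i ∈ Finset.range n, (⇑f)^[i] ⁻¹' T with hS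
  have hmemS : ∀ (x : X) (n : ℕ), x ∈ S n ↔ ∀ i < n, (⇑f)^[i] x ∈ T := by
    intro x n; simp [hS]
  by_cases hcase : ∀ n, (S n).Nonempty
  · -- Case 1 : reduction
    right
    have hScl : ∀ n, IsClosed (S n) :=
      fun n => isClosed_biInter fun i _ => hTcl.preimage (f.continuous.iterate i)
    have hSd : ∀ n, S (n + 1) ⊆ S n := by
      intro n x hx
      rw [hmemS] at hx ⊢
      exact fun i hi => hx i (by omega)
    obtain ⟨y0, hy0⟩ := IsCompact.nonempty_iInter_of_sequence_nonempty_isCompact_isClosed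
      S hSd hcase (hScl 0).isCompact hScl
    have hchain : ∀ n : ℕ, (⇑f)^[n] y0 ∈ T := by
      intro n
      exact (hmemS y0 (n + 1)).1 (mem_iInter.1 hy0 (n + 1)) n (by omega)
    have hfwd := fwd_dense f hmin y0
    have hGfH : ∀ u : X, (u, f u) ∈ H := by
      intro u
      have hmap : Continuous fun y : X => (y, f y) := continuous_id.prodMk f.continuous
      have h2 : (fun y : X => (y, f y)) '' (range fun n : ℕ => (⇑f)^[n] y0) ⊆ H := by
        rintro _ ⟨_, ⟨n, rfl⟩, rfl⟩
        exact hchain n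
      have h3 : (u, f u) ∈ closure H := by
        have hu : u ∈ closure (range fun n : ℕ => (⇑f)^[n] y0) := by
          rw [hfwd.closure_eq]; trivial
        have := image_closure_subset_closure_image (s := range fun n : ℕ => (⇑f)^[n] y0) hmap
        exact (closure_mono h2) (this ⟨u, hu, rfl⟩)
      rwa [hHcl.closure_eq] at h3
    have hsurj : Function.Surjective φ := by
      have hr : IsClosed (range φ) := (isCompact_range hφc).isClosed
      have hsub : (range fun n : ℕ => (⇑f)^[n] y0) ⊆ range φ := by
        rintro _ ⟨n, rfl⟩
        obtain ⟨⟨a, b⟩, _, hab⟩ := hchain n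
        exact ⟨a, congrArg Prod.fst hab⟩
      have : range φ = univ := by
        have hd : Dense (range φ) := hfwd.mono hsub
        rw [← hr.closure_eq]
        exact hd.closure_eq
      exact range_eq_univ.mp this
    set e : K ≃ X := Equiv.ofBijective φ ⟨hφi, hsurj⟩ with he
    have hec : Continuous ⇑e := hφc
    set h : K ≃ₜ X := hec.homeoOfEquivCompactToT2 with hh
    have hcoe : ∀ a : K, h a = φ a := fun a => rfl
    refine ⟨⇑h.symm, h.symm.continuous, h.symm.injective, ?_⟩
    intro u v huv
    have hmem : (u, v) ∈ H := by
      rcases huv.2 with h' | h'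
      · rw [show v = f u from h']; exact hGfH u
      · have h5 := hGfH v
        rw [← show u = f v from h'] at h5
        exact hHsym (v, u) h5
    obtain ⟨⟨a, b⟩, hab, habm⟩ := hmem
    have hu : h.symm u = a := by
      have : h a = u := by rw [hcoe]; exact congrArg Prod.fst habm
      rw [← this, Homeomorph.symm_apply_apply]
    have hv : h.symm v = b := by
      have : h b = v := by rw [hcoe]; exact congrArg Prod.snd habm
      rw [← this, Homeomorph.symm_apply_apply]
    rw [hu, hv]; exact hab
  · -- Case 2 : coloring
    left
    push_neg at hcase
    obtain ⟨N, hSN⟩ := hcase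
    -- clopen approximation of T
    have key : ∃ V : Set X, IsClopen V ∧ T ⊆ V ∧
        (⋂ i ∈ Finset.range N, (⇑f)^[i] ⁻¹' V) = ∅ := by
      set ι := {V : Set X // IsClopen V ∧ T ⊆ V} with hι
      set Z : ι → Set X := fun V => ⋂ i ∈ Finset.range N, (⇑f)^[i] ⁻¹' V.1 with hZ
      have hZcl : ∀ V : ι, IsClosed (Z V) :=
        fun V => isClosed_biInter fun i _ => V.2.1.isClosed.preimage (f.continuous.iterate i)
      have hiZ : (⋂ V : ι, Z V) = ∅ := by
        have hTeq := clopen_inter_eq hX.2.2 T hTcl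
        rw [← hSN, hS]
        ext x
        simp only [hZ, mem_iInter, Finset.mem_range, mem_preimage]
        constructor
        · intro hx i hi
          have : (⇑f)^[i] x ∈ ⋂ V : ι, (V : Set X) := mem_iInter.2 fun V => hx V i hi
          rwa [hTeq] at this
        · intro hx V i hi
          exact V.2.2 (hx i hi)
      obtain ⟨t, ht⟩ := isCompact_univ.elim_finite_subfamily_closed Z hZcl (by simp [hiZ])
      have ht' : (⋂ V ∈ t, Z V) = ∅ := by
        rw [← ht]; simp
      refine ⟨⋂ V ∈ t, (V : Set X),
        Set.Finite.isClopen_biInter t.finite_toSet (fun V _ => V.2.1),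
        fun x hx => mem_iInter₂.2 fun V _ => V.2.2 hx, ?_⟩
      rw [eq_empty_iff_forall_notMem] at ht' ⊢
      intro x hx
      apply ht' x
      refine mem_iInter₂.2 fun V hV => mem_iInter₂.2 fun i hi => ?_
      exact mem_iInter₂.1 (mem_iInter₂.1 hx i hi) V hV
    obtain ⟨V, hVclopen, hTV, hVempty⟩ := key
    set P : X → ℕ → Prop := fun y m => ∀ i, 0 < i → i ≤ m → (⇑f.symm)^[i] y ∈ V with hP
    have hP0 : ∀ y, P y 0 := fun y i h1 h2 => absurd (h1.trans_le h2) (lt_irrefl 0)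
    have hPN : ∀ y, ¬ P y N := by
      intro y hy
      have hmem2 : (⇑f.symm)^[N] y ∈ ⋂ i ∈ Finset.range N, (⇑f)^[i] ⁻¹' V := by
        refine mem_iInter₂.2 fun i hi => ?_
        have hi' : i < N := Finset.mem_range.1 hi
        rw [mem_preimage, iter_cancel f i N (by omega) y]
        exact hy (N - i) (by omega) (by omega)
      rw [hVempty] at hmem2
      exact hmem2
    set L : X → ℕ := fun y => Nat.findGreatest (P y) N with hL
    have hPLy : ∀ y, P y (L y) := fun y => Nat.findGreatest_spec (Nat.zero_le N) (hP0 y)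
    have hLle : ∀ y, L y ≤ N := fun y => Nat.findGreatest_le N
    have hLlt : ∀ y, L y < N := by
      intro y
      rcases (hLle y).lt_or_eq with h' | h'
      · exact h'
      · exact absurd (h' ▸ hPLy y) (hPN y)
    have hPsucc : ∀ (y : X) (m : ℕ), P (f y) (m + 1) ↔ (y ∈ V ∧ P y m) := by
      intro y m
      constructor
      · intro h'
        have h1 : y ∈ V := by
          have := h' 1 one_pos (by omega)
          simpa using this
        refine ⟨h1, fun i hi him => ?_⟩
        have := h' (i + 1) (by omega) (by omega)
        rwa [Function.iterate_succ_apply, f.symm_apply_apply] at this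
      · rintro ⟨h1, h2⟩ i hi him
        obtain ⟨j, rfl⟩ : ∃ j, i = j + 1 := ⟨i - 1, by omega⟩
        rw [Function.iterate_succ_apply, f.symm_apply_apply]
        rcases Nat.eq_zero_or_pos j with hj | hj
        · subst hj; simpa using h1
        · exact h2 j hj (by omega)
    have hLsucc : ∀ y ∈ V, L (f y) = L y + 1 := by
      intro y hy
      apply le_antisymm
      · by_contra h'
        push_neg at h'
        obtain ⟨m, hm⟩ : ∃ m, L (f y) = m + 1 := ⟨L (f y) - 1, by omega⟩
        have hp : P (f y) (m + 1) := hm ▸ hPLy (f y)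
        have hPm := (hPsucc y m).1 hp
        have hmN : m ≤ N := by have := hLle (f y); omega
        exact Nat.findGreatest_is_greatest (by omega : L y < m) hmN hPm.2
      · exact Nat.le_findGreatest (by have := hLlt y; omega)
          ((hPsucc y (L y)).2 ⟨hy, hPLy y⟩)
    have hLloc : ∀ y : X, ∃ U, IsOpen U ∧ y ∈ U ∧ ∀ z ∈ U, L z = L y := by
      intro y
      set U := ⋂ i ∈ Finset.Icc 1 N, {z : X | (⇑f.symm)^[i] z ∈ V ↔ (⇑f.symm)^[i] y ∈ V} with hU
      have hUopen : IsOpen U := by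
        refine isOpen_biInter_finset fun i _ => ?_
        by_cases hc : (⇑f.symm)^[i] y ∈ V
        · have heq : {z : X | (⇑f.symm)^[i] z ∈ V ↔ (⇑f.symm)^[i] y ∈ V}
              = (⇑f.symm)^[i] ⁻¹' V := by
            ext z; simp [hc]
          rw [heq]
          exact hVclopen.2.preimage (f.symm.continuous.iterate i)
        · have heq : {z : X | (⇑f.symm)^[i] z ∈ V ↔ (⇑f.symm)^[i] y ∈ V}
              = ((⇑f.symm)^[i] ⁻¹' V)ᶜ := by
            ext z; simp [hc]
          rw [heq]
          exact (hVclopen.1.preimage (f.symm.continuous.iterate i)).isOpen_compl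
      have hyU : y ∈ U := mem_iInter₂.2 fun i _ => Iff.rfl
      refine ⟨U, hUopen, hyU, fun z hz => ?_⟩
      have hPiff : ∀ m ≤ N, (P z m ↔ P y m) := by
        intro m hm
        have hz' := mem_iInter₂.1 hz
        constructor
        · intro h' i hi him
          exact (hz' i (Finset.mem_Icc.2 ⟨hi, by omega⟩)).1 (h' i hi him)
        · intro h' i hi him
          exact (hz' i (Finset.mem_Icc.2 ⟨hi, by omega⟩)).2 (h' i hi him)
      apply le_antisymm
      · exact Nat.le_findGreatest (hLle z) ((hPiff (L z) (hLle z)).1 (hPLy z))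
      · exact Nat.le_findGreatest (hLle y) ((hPiff (L y) (hLle y)).2 (hPLy y))
    set c : X → Fin 2 := fun y => ((L y : ℕ) : Fin 2) with hc
    have hccont : Continuous c := by
      apply IsLocallyConstant.continuous
      rw [IsLocallyConstant.iff_exists_open]
      intro y
      obtain ⟨U, h1, h2, h3⟩ := hLloc y
      exact ⟨U, h1, h2, fun z hz => by simp only [hc, h3 z hz]⟩
    have key2 : ∀ u : X, u ∈ V → c (f u) ≠ c u := by
      intro u hu
      have : c (f u) = c u + 1 := by
        simp only [hc, hLsucc u hu, Nat.cast_add, Nat.cast_one]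
      rw [this]
      have : ∀ a : Fin 2, a + 1 ≠ a := by decide
      exact this (c u)
    refine ⟨fun k => c (φ k), hccont.comp hφc, ?_⟩
    intro a b hab
    have hH1 : (φ a, φ b) ∈ H := ⟨(a, b), hab, rfl⟩
    rcases (hφh a b hab).2 with h' | h'
    · have hTa : φ a ∈ T := by
        rw [hT, mem_setOf_eq, ← show φ b = f (φ a) from h']
        exact hH1
      have := key2 (φ a) (hTV hTa)
      rw [← show φ b = f (φ a) from h'] at this
      exact this.symm
    · have hH2 : (φ b, φ a) ∈ H := hHsym (φ a, φ b) hH1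
      have hTb : φ b ∈ T := by
        rw [hT, mem_setOf_eq, ← show φ a = f (φ b) from h']
        exact hH2
      have := key2 (φ b) (hTV hTb)
      rw [← show φ a = f (φ b) from h'] at this
      exact this

private lemma fpf {X : Type*} [TopologicalSpace X] (hX : Is0DMC X) (f : X ≃ₜ X)
    (hmin : IsMinimalHomeo f) (hchi : ¬ HasContColoring (FnGraph ⇑f) 2) :
    ∀ u : X, f u ≠ u := by
  haveI : MetrizableSpace X := hX.2.1
  intro u h
  have hfix : Function.IsFixedPt f.toEquiv u := h
  have horb : ∀ i : ℤ, (f.toEquiv ^ i) u = u := fun i => hfix.perm_zpow i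
  have hd : Dense ({u} : Set X) := by
    refine (hmin u).mono ?_
    rintro _ ⟨i, rfl⟩
    simp [horb i]
  have hall : ∀ x : X, x = u := by
    intro x
    have : closure ({u} : Set X) = univ := hd.closure_eq
    have hx : x ∈ closure ({u} : Set X) := this ▸ trivial
    rwa [isClosed_singleton.closure_eq, mem_singleton_iff] at hx
  exact hchi ⟨fun _ => 0, continuous_const,
    fun x y hxy => absurd ((hall x).trans (hall y).symm) hxy.1⟩

theorem stmt19 (X : Type*) [TopologicalSpace X] (hX : Is0DMC X)
    (f : X ≃ₜ X) (hmin : IsMinimalHomeo f)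
    (hchi : ¬ HasContColoring (FnGraph ⇑f) 2)
    (K : Type*) [TopologicalSpace K] (hK : Is0DMC K)
    (G : Set (K × K)) (hG : IsGraph G) (hGclosed : IsClosed G)
    (hred : RedIC G (FnGraph ⇑f)) :
    Xor' (HasContColoring G 2) (RedIC (FnGraph ⇑f) G) ∧
    (∀ (L : Type*) [TopologicalSpace L], Is0DMC L →
        ∀ H : Set (L × L), IsGraph H → IsClosed H → ¬ HasContColoring H 2 →
          RedIC H (FnGraph ⇑f) → RedIC (FnGraph ⇑f) H) ∧
    (∀ (L : Type*) [TopologicalSpace L], Is0DMC L →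
        ∀ g : L ≃ₜ L, ¬ HasContColoring (FnGraph ⇑g) 2 →
          RedIC (FnGraph ⇑g) (FnGraph ⇑f) → RedIC (FnGraph ⇑f) (FnGraph ⇑g)) := by
  haveI : CompactSpace K := hK.1
  haveI : MetrizableSpace K := hK.2.1
  haveI : CompactSpace X := hX.1
  haveI : MetrizableSpace X := hX.2.1
  obtain ⟨φ, hφc, hφi, hφh⟩ := hred
  have hcomp : ∀ {L : Type _} [TopologicalSpace L] (G' : Set (L × L)),
      HasContColoring G' 2 → RedIC (FnGraph ⇑f) G' → False := by
    rintro L _ G' ⟨c, hcc, hcol⟩ ⟨ψ, hψc, _, hψh⟩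
    exact hchi ⟨fun x => c (ψ x), hcc.comp hψc, fun x y hxy => hcol _ _ (hψh x y hxy)⟩
  have hHcl : IsClosed (Prod.map φ φ '' G) :=
    ((hGclosed.isCompact).image (hφc.prodMap hφc)).isClosed
  have hdi := dichot hX f hmin G hG.1 φ hφc hφi hφh hHcl
  refine ⟨?_, ?_, ?_⟩
  · rcases hdi with h | h
    · exact Or.inl ⟨h, fun hr => hcomp G h hr⟩
    · exact Or.inr ⟨h, fun hcol => hcomp G hcol h⟩
  · intro L _ hL H hHgr hHcl' hHchi hHred
    haveI : CompactSpace L := hL.1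
    obtain ⟨φ', h1, h2, h3⟩ := hHred
    have hcl : IsClosed (Prod.map φ' φ' '' H) :=
      ((hHcl'.isCompact).image (h1.prodMap h1)).isClosed
    rcases dichot hX f hmin H hHgr.1 φ' h1 h2 h3 hcl with h | h
    · exact absurd h hHchi
    · exact h
  · intro L _ hL g hgchi hgred
    haveI : CompactSpace L := hL.1
    haveI : MetrizableSpace L := hL.2.1
    obtain ⟨φ', h1, h2, h3⟩ := hgred
    have hfpf := fpf hX f hmin hchi
    have hsymg : ∀ a b : L, (a, b) ∈ FnGraph ⇑g → (b, a) ∈ FnGraph ⇑g := by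
      rintro a b ⟨hne, hor⟩
      exact ⟨fun h => hne h.symm, hor.symm⟩
    have hcl : IsClosed (Prod.map φ' φ' '' FnGraph ⇑g) := by
      set Γ : Set (X × X) := {p | p.2 = f p.1 ∨ p.1 = f p.2} with hΓ
      have hΓcl : IsClosed Γ :=
        (isClosed_eq continuous_snd (f.continuous.comp continuous_fst)).union
          (isClosed_eq continuous_fst (f.continuous.comp continuous_snd))
      set Γg : Set (L × L) := {p | p.2 = g p.1 ∨ p.1 = g p.2} with hΓg
      have hΓgcl : IsClosed Γg :=
        (isClosed_eq continuous_snd (g.continuous.comp continuous_fst)).union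
          (isClosed_eq continuous_fst (g.continuous.comp continuous_snd))
      set C := closure (FnGraph ⇑g) with hC
      have hCsub : C ⊆ Γg := closure_minimal (fun p hp => hp.2) hΓgcl
      have himgcl : IsClosed (Prod.map φ' φ' '' C) :=
        ((isClosed_closure.isCompact).image (h1.prodMap h1)).isClosed
      have heq : Prod.map φ' φ' '' FnGraph ⇑g = (Prod.map φ' φ' '' C) ∩ Γ := by
        apply Subset.antisymm
        · rintro _ ⟨⟨a, b⟩, hab, rfl⟩
          exact ⟨⟨(a, b), subset_closure hab, rfl⟩, (h3 a b hab).2⟩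
        · rintro _ ⟨⟨⟨a, b⟩, hab, rfl⟩, hΓm⟩
          have hne : a ≠ b := by
            rintro rfl
            rcases hΓm with h' | h'
            · exact hfpf (φ' a) (show φ' a = f (φ' a) from h').symm
            · exact hfpf (φ' a) (show φ' a = f (φ' a) from h').symm
          exact ⟨(a, b), ⟨hne, hCsub hab⟩, rfl⟩
      rw [heq]
      exact himgcl.inter hΓcl
    rcases dichot hX f hmin (FnGraph ⇑g) hsymg φ' h1 h2 h3 hcl with h | h
    · exact absurd h hgchi
    · exact h
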